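/- Under the Galerkin error relation for the adjoint and the coercivity of the CutFEM form with respect to the mesh-dependent norm M, the estimate (4.7) of Theorem 4.2 holds with explicit constant: N(p̄ − p̄_h) ≤ N(p̄ − p^h) + (C_*·C_P/c)‖ȳ − ȳ_h‖. -/

import Mathlib

open scoped RealInnerProductSpace

/-- Estimate (4.7) of Theorem 4.2 with explicit constant:
`|||p̄ − p̄_h|||_* ≤ |||p̄ − p^h|||_* + (C_*·C_P/c)‖ȳ − ȳ_h‖`. -/
theorem cutfem_error_estimate_4_7
    {H : Type*} [NormedAddCommGroup H] [InnerProductSpace ℝ H]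
    (V : Submodule ℝ H) (b : V →ₗ[ℝ] V →ₗ[ℝ] ℝ)
    (ybar pbar : H) (yh ph pH : V)
    (hG2 : ∀ v : V, b v (ph - pH) = ⟪(yh : H) - ybar, (v : H)⟫)
    (N M : Seminorm ℝ H) (c Cs CP : ℝ) (hc : 0 < c) (hCs : 0 < Cs) (hCP : 0 < CP)
    (hcoer : ∀ v : V, c * (M (v : H)) ^ 2 ≤ b v v)
    (hN : ∀ v : V, N (v : H) ≤ Cs * M (v : H))
    (hP : ∀ v : V, ‖(v : H)‖ ≤ CP * M (v : H)) :
    N (pbar - (ph : H)) ≤ N (pbar - (pH : H)) + (Cs * CP / c) * ‖ybar - (yh : H)‖ := by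
  set e : V := ph - pH with he
  have key : c * (M (e : H)) ^ 2 ≤ ‖ybar - (yh : H)‖ * (CP * M (e : H)) := by
    calc c * (M (e : H)) ^ 2 ≤ b e e := hcoer e
      _ = ⟪(yh : H) - ybar, (e : H)⟫ := hG2 e
      _ ≤ ‖(yh : H) - ybar‖ * ‖(e : H)‖ := real_inner_le_norm _ _
      _ ≤ ‖ybar - (yh : H)‖ * (CP * M (e : H)) := by
          rw [show (yh : H) - ybar = -(ybar - (yh : H)) from (neg_sub _ _).symm, norm_neg]
          exact mul_le_mul_of_nonneg_left (hP e) (norm_nonneg _)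
  have hMe : M (e : H) ≤ (CP / c) * ‖ybar - (yh : H)‖ := by
    rcases eq_or_lt_of_le (apply_nonneg M (e : H)) with h0 | h0
    · rw [← h0]
      positivity
    · have := (mul_le_mul_iff_of_pos_right h0).mp (by
        calc c * M (e : H) * M (e : H) = c * (M (e : H)) ^ 2 := by ring
          _ ≤ ‖ybar - (yh : H)‖ * (CP * M (e : H)) := key
          _ = ‖ybar - (yh : H)‖ * CP * M (e : H) := by ring)
      rw [div_mul_eq_mul_div, le_div_iff₀ hc]
      linarith [this]
  have tri : N (pbar - (ph : H)) ≤ N (pbar - (pH : H)) + N ((e : H)) := by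
    have : pbar - (ph : H) = (pbar - (pH : H)) - (e : H) := by
      rw [he, Submodule.coe_sub]; abel
    rw [this]
    exact map_sub_le_add N _ _
  have hNe : N ((e : H)) ≤ (Cs * CP / c) * ‖ybar - (yh : H)‖ := by
    calc N ((e : H)) ≤ Cs * M (e : H) := hN e
      _ ≤ Cs * ((CP / c) * ‖ybar - (yh : H)‖) :=
          mul_le_mul_of_nonneg_left hMe hCs.le
      _ = (Cs * CP / c) * ‖ybar - (yh : H)‖ := by ring
  linarith
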